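/- If A is a strongly unimodular matrix, then the matrix obtained from A by appending a unit column (a column with exactly one nonzero entry, that entry being 1 or -1) is strongly unimodular; likewise, the matrix obtained from A by appending a unit row (a row with exactly one nonzero entry, that entry being 1 or -1) is strongly unimodular. -/

import Mathlib

open scoped Matrix


/-- A matrix is strongly unimodular if it is totally unimodular and remains totally
unimodular after replacing any single nonzero entry by `0`. -/
def IsStronglyUnimodular {m n : Type*} [DecidableEq m] [DecidableEq n]
    (A : Matrix m n ℚ) : Prop :=
  A.IsTotallyUnimodular ∧
    ∀ i j, A i j ≠ 0 → (A.updateRow i (Function.update (A i) j 0)).IsTotallyUnimodular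

lemma aux_single {m : Type*} [DecidableEq m] {a : m → ℚ} {i₀ : m}
    (h1 : a i₀ = 1 ∨ a i₀ = -1) (h0 : ∀ i, i ≠ i₀ → a i = 0) :
    ∃ s : SignType, a = Pi.single i₀ (s : ℚ) := by
  rcases h1 with h | h
  · refine ⟨1, funext fun i => ?_⟩
    rcases eq_or_ne i i₀ with rfl | hi
    · simp [h]
    · simp [h0 i hi, Pi.single_eq_of_ne hi]
  · refine ⟨-1, funext fun i => ?_⟩
    rcases eq_or_ne i i₀ with rfl | hi
    · simp [h]
    · simp [h0 i hi, Pi.single_eq_of_ne hi]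

lemma aux_col {m n : Type*} [DecidableEq m] [DecidableEq n] {A : Matrix m n ℚ}
    (hA : A.IsTotallyUnimodular) (a : m → ℚ)
    (ha : ∃ i₀ : m, ∃ s : SignType, a = Pi.single i₀ (s : ℚ)) :
    (Matrix.fromCols A (Matrix.of fun i (_ : Unit) => a i)).IsTotallyUnimodular := by
  rw [← Matrix.transpose_isTotallyUnimodular_iff, Matrix.transpose_fromCols]
  refine (Matrix.fromRows_isTotallyUnimodular_iff_rows fun _ _ => ?_).mpr hA.transpose
  obtain ⟨i₀, s, rfl⟩ := ha
  exact ⟨i₀, s, rfl⟩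

lemma aux_su_col {m n : Type*} [DecidableEq m] [DecidableEq n]
    (A : Matrix m n ℚ) (hA : IsStronglyUnimodular A) (a : m → ℚ) (i₀ : m)
    (h1 : a i₀ = 1 ∨ a i₀ = -1) (h0 : ∀ i, i ≠ i₀ → a i = 0) :
    IsStronglyUnimodular (Matrix.fromCols A (Matrix.of fun i (_ : Unit) => a i)) := by
  obtain ⟨s, hs⟩ := aux_single h1 h0
  constructor
  · exact aux_col hA.1 a ⟨i₀, s, hs⟩
  · intro i j hij
    match j with
    | Sum.inl j =>
      have hne : A i j ≠ 0 := by simpa using hij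
      have heq : (Matrix.fromCols A (Matrix.of fun i (_ : Unit) => a i)).updateRow i
          (Function.update ((Matrix.fromCols A (Matrix.of fun i (_ : Unit) => a i)) i)
            (Sum.inl j) 0)
          = Matrix.fromCols (A.updateRow i (Function.update (A i) j 0))
            (Matrix.of fun i (_ : Unit) => a i) := by
        ext i' j'
        rcases eq_or_ne i' i with rfl | hi'
        · cases j' with
          | inl j'' => simp [Matrix.updateRow_apply, Function.update_apply]
          | inr u => simp [Matrix.updateRow_apply, Function.update_apply]
        · cases j' with
          | inl j'' => simp [Matrix.updateRow_apply, hi']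
          | inr u => simp [Matrix.updateRow_apply, hi']
      rw [heq]
      exact aux_col (hA.2 i j hne) a ⟨i₀, s, hs⟩
    | Sum.inr u =>
      have hii₀ : i = i₀ := by
        by_contra h
        exact hij (by simpa using h0 i h)
      subst hii₀
      have heq : (Matrix.fromCols A (Matrix.of fun i (_ : Unit) => a i)).updateRow i
          (Function.update ((Matrix.fromCols A (Matrix.of fun i (_ : Unit) => a i)) i)
            (Sum.inr u) 0)
          = Matrix.fromCols A (Matrix.of fun i' (_ : Unit) => (0 : m → ℚ) i') := by
        ext i' j'
        rcases eq_or_ne i' i with rfl | hi'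
        · cases j' with
          | inl j'' => simp [Matrix.updateRow_apply, Function.update_apply]
          | inr u' => simp [Matrix.updateRow_apply, Function.update_apply]
        · cases j' with
          | inl j'' => simp [Matrix.updateRow_apply, hi']
          | inr u' => simp [Matrix.updateRow_apply, hi', h0 i' hi']
      rw [heq]
      exact aux_col hA.1 0 ⟨i, 0, (funext fun x => by simp [Pi.single_apply])⟩

lemma aux_su_transpose {m n : Type*} [DecidableEq m] [DecidableEq n]
    {A : Matrix m n ℚ} (hA : IsStronglyUnimodular A) : IsStronglyUnimodular Aᵀ := by
  refine ⟨hA.1.transpose, fun j i hji => ?_⟩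
  have hne : A i j ≠ 0 := hji
  have heq : Aᵀ.updateRow j (Function.update (Aᵀ j) i 0)
      = (A.updateRow i (Function.update (A i) j 0))ᵀ := by
    ext j' i'
    rcases eq_or_ne j' j with rfl | hj' <;> rcases eq_or_ne i' i with rfl | hi' <;>
      simp [Matrix.updateRow_apply, Function.update_apply, *]
  rw [heq]
  exact (hA.2 i j hne).transpose

/-- Appending a unit column (a column with a single nonzero entry equal to 1 or -1), or a
unit row, to a strongly unimodular matrix yields a strongly unimodular matrix. -/
theorem isStronglyUnimodular_append_unit_col_row {m n : Type*} [DecidableEq m] [DecidableEq n]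
    (A : Matrix m n ℚ) (hA : IsStronglyUnimodular A) :
    (∀ (a : m → ℚ) (i₀ : m), (a i₀ = 1 ∨ a i₀ = -1) → (∀ i, i ≠ i₀ → a i = 0) →
      IsStronglyUnimodular (Matrix.fromCols A (Matrix.of fun i (_ : Unit) => a i))) ∧
    (∀ (b : n → ℚ) (j₀ : n), (b j₀ = 1 ∨ b j₀ = -1) → (∀ j, j ≠ j₀ → b j = 0) →
      IsStronglyUnimodular (Matrix.fromRows A (Matrix.of fun (_ : Unit) j => b j))) := by
  refine ⟨fun a i₀ h1 h0 => aux_su_col A hA a i₀ h1 h0, fun b j₀ h1 h0 => ?_⟩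
  have h := aux_su_col Aᵀ (aux_su_transpose hA) b j₀ h1 h0
  have h2 := aux_su_transpose h
  have heq : (Matrix.fromCols Aᵀ (Matrix.of fun j (_ : Unit) => b j))ᵀ
      = Matrix.fromRows A (Matrix.of fun (_ : Unit) j => b j) := by
    ext i j
    cases i <;> simp
  rwa [heq] at h2
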